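/- Define ζ(c) = c²/(e^c − 1) − 2c·log(1 − e^{−c}) + 2·Li₂(e^{−c}) for c > 0. Then ζ is differentiable on (0, ∞) with ζ'(c) = −c²e^c/(e^c − 1)² < 0, so ζ is strictly decreasing on (0, ∞); moreover ζ(c) → π²/3 as c → 0⁺ and ζ(c) → 0 as c → ∞. -/

import Mathlib

open scoped Real

/-- The dilogarithm `Li₂(x) = ∑_{k=1}^∞ x^k / k²`. -/
noncomputable def Li2 (x : ℝ) : ℝ := ∑' k : ℕ, x ^ (k + 1) / ((k : ℝ) + 1) ^ 2

/-- `ζ(c) = c²/(e^c − 1) − 2c·log(1 − e^{−c}) + 2·Li₂(e^{−c})`. -/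
noncomputable def zeta (c : ℝ) : ℝ :=
  c ^ 2 / (Real.exp c - 1) - 2 * c * Real.log (1 - Real.exp (-c)) + 2 * Li2 (Real.exp (-c))

open Real

-- derivative of Li2
lemma hasDerivAt_Li2 {x : ℝ} (h0 : 0 < x) (h1 : x < 1) :
    HasDerivAt Li2 (-Real.log (1 - x) / x) x := by
  set r : ℝ := (x + 1) / 2 with hr
  have hr0 : 0 < r := by positivity
  have hxr : x < r := by rw [hr]; linarith
  have hr1 : r < 1 := by rw [hr]; linarith
  have key : HasDerivAt (fun z : ℝ => ∑' n : ℕ, z ^ (n + 1) / ((n : ℝ) + 1) ^ 2)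
      (∑' n : ℕ, x ^ n / ((n : ℝ) + 1)) x := by
    apply hasDerivAt_tsum_of_isPreconnected (u := fun n : ℕ => r ^ n)
      (g' := fun (n : ℕ) (y : ℝ) => y ^ n / ((n : ℝ) + 1))
      (summable_geometric_of_lt_one hr0.le hr1) (isOpen_Ioo (a := -r) (b := r))
      (convex_Ioo _ _).isPreconnected
    · intro n y _
      have h := (hasDerivAt_pow (n + 1) y).div_const (((n : ℝ) + 1) ^ 2)
      refine h.congr_deriv ?_
      have hn : ((n : ℝ) + 1) ≠ 0 := by positivity
      simp only [Nat.add_sub_cancel]; push_cast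
      field_simp
    · intro n y hy
      have hy' : |y| ≤ r := by
        rw [abs_le]; exact ⟨hy.1.le, hy.2.le⟩
      have : |y ^ n / ((n : ℝ) + 1)| ≤ |y| ^ n := by
        rw [abs_div, abs_pow]
        have hn : (1 : ℝ) ≤ |((n : ℝ) + 1)| := by
          rw [abs_of_pos (by positivity)]; linarith [Nat.cast_nonneg (α := ℝ) n]
        calc |y| ^ n / |((n : ℝ) + 1)| ≤ |y| ^ n / 1 := by
              apply div_le_div_of_nonneg_left (by positivity) one_pos hn
          _ = |y| ^ n := by ring
      calc ‖y ^ n / ((n : ℝ) + 1)‖ ≤ |y| ^ n := this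
        _ ≤ r ^ n := pow_le_pow_left₀ (abs_nonneg _) hy' n
    · exact ⟨neg_neg_of_pos hr0, hr0⟩
    · exact summable_zero.congr (fun n => by simp)
    · exact ⟨by linarith, hxr⟩
  have hsum : HasSum (fun n : ℕ => x ^ n / ((n : ℝ) + 1)) (-Real.log (1 - x) / x) := by
    have h := (hasSum_pow_div_log_of_abs_lt_one
      (x := x) (by rw [abs_of_pos h0]; exact h1)).div_const x
    have e : (fun n : ℕ => x ^ n / ((n : ℝ) + 1)) = fun n : ℕ => x ^ (n + 1) / ((n : ℝ) + 1) / x := by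
      funext n
      rw [pow_succ]
      field_simp
    rw [e]; exact h
  rw [hsum.tsum_eq] at key
  exact key

noncomputable def proj01 (x : ℝ) : ℝ := max 0 (min x 1)

lemma proj01_mem (x : ℝ) : proj01 x ∈ Set.Icc (0:ℝ) 1 := by
  refine ⟨le_max_left _ _, ?_⟩
  rw [proj01, max_le_iff]
  exact ⟨zero_le_one, min_le_right _ _⟩

lemma proj01_of_mem {x : ℝ} (hx : x ∈ Set.Icc (0:ℝ) 1) : proj01 x = x := by
  rw [proj01, min_eq_left hx.2, max_eq_right hx.1]

lemma summable_inv_sq : Summable (fun k : ℕ => 1 / ((k : ℝ) + 1) ^ 2) := by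
  have h : Summable (fun k : ℕ => (1 : ℝ) / (k : ℝ) ^ 2) :=
    Real.summable_one_div_nat_pow.mpr one_lt_two
  exact ((summable_nat_add_iff 1).mpr h).congr (fun n => by push_cast; norm_num)

noncomputable def Li2ext (x : ℝ) : ℝ := ∑' k : ℕ, (proj01 x) ^ (k + 1) / ((k : ℝ) + 1) ^ 2

lemma continuous_Li2ext : Continuous Li2ext := by
  apply continuous_tsum (u := fun k : ℕ => 1 / ((k : ℝ) + 1) ^ 2)
  · intro k
    exact ((continuous_const.max (continuous_id.min continuous_const)).pow _).div_const _
  · exact summable_inv_sq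
  · intro n x
    have h := proj01_mem x
    rw [norm_div, norm_pow, Real.norm_eq_abs, abs_of_nonneg h.1, Real.norm_eq_abs,
      abs_of_pos (by positivity : (0:ℝ) < ((n:ℝ)+1)^2)]
    have hb : proj01 x ^ (n + 1) ≤ 1 := pow_le_one₀ h.1 h.2
    gcongr

lemma Li2ext_eq {x : ℝ} (hx : x ∈ Set.Icc (0:ℝ) 1) : Li2ext x = Li2 x := by
  rw [Li2ext, proj01_of_mem hx, Li2]

lemma Li2ext_one : Li2ext 1 = π ^ 2 / 6 := by
  have hb : HasSum (fun n : ℕ => (1 : ℝ) / ((n : ℝ) + 1) ^ 2) (π ^ 2 / 6) := by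
    have h := hasSum_zeta_two
    have h2 := (hasSum_nat_add_iff' (f := fun n : ℕ => (1:ℝ) / (n : ℝ) ^ 2) 1).mpr h
    simp only [Finset.range_one, Finset.sum_singleton, Nat.cast_zero] at h2
    norm_num at h2
    exact h2.congr (fun n => by push_cast; norm_num)
  rw [Li2ext]
  have : (fun k : ℕ => (proj01 1) ^ (k + 1) / ((k : ℝ) + 1) ^ 2)
      = fun k : ℕ => (1 : ℝ) / ((k : ℝ) + 1) ^ 2 := by
    funext k
    rw [proj01_of_mem (by norm_num)]
    norm_num
  rw [this, hb.tsum_eq]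

lemma Li2ext_zero : Li2ext 0 = 0 := by
  rw [Li2ext]
  convert tsum_zero with k
  rw [proj01_of_mem (by norm_num)]
  simp

lemma zeta_hasDerivAt {c : ℝ} (hc : 0 < c) :
    HasDerivAt zeta (-(c ^ 2 * Real.exp c / (Real.exp c - 1) ^ 2)) c := by
  have he1 : 1 < Real.exp c := by
    rw [← Real.exp_zero]; exact Real.exp_lt_exp.mpr hc
  have hne : Real.exp c - 1 ≠ 0 := by linarith
  have ht0 : 0 < Real.exp (-c) := Real.exp_pos _
  have ht1 : Real.exp (-c) < 1 := by
    rw [← Real.exp_zero]; exact Real.exp_lt_exp.mpr (by linarith)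
  have hu0 : 0 < 1 - Real.exp (-c) := by linarith
  -- piece A
  have hA : HasDerivAt (fun c : ℝ => c ^ 2 / (Real.exp c - 1))
      ((2 * c * (Real.exp c - 1) - c ^ 2 * Real.exp c) / (Real.exp c - 1) ^ 2) c := by
    have h := (hasDerivAt_pow 2 c).div ((Real.hasDerivAt_exp c).sub_const 1) hne
    refine h.congr_deriv ?_
    norm_num
  -- inner : c ↦ exp (-c)
  have hexpneg : HasDerivAt (fun c : ℝ => Real.exp (-c)) (-Real.exp (-c)) c := by
    have h := (Real.hasDerivAt_exp (-c)).comp c (hasDerivAt_neg c)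
    exact h.congr_deriv (by ring)
  have hInner : HasDerivAt (fun c : ℝ => 1 - Real.exp (-c)) (Real.exp (-c)) c := by
    simpa using (hexpneg.const_sub 1)
  -- piece B
  have hB : HasDerivAt (fun c : ℝ => 2 * c * Real.log (1 - Real.exp (-c)))
      (2 * Real.log (1 - Real.exp (-c)) + 2 * c * (Real.exp (-c) / (1 - Real.exp (-c)))) c := by
    have hlog := hInner.log (ne_of_gt hu0)
    have h := ((hasDerivAt_id c).const_mul 2).mul hlog
    refine h.congr_deriv ?_
    simp only [id_eq]
    ring
  -- piece C
  have hC : HasDerivAt (fun c : ℝ => Li2 (Real.exp (-c)))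
      (-Real.log (1 - Real.exp (-c)) / Real.exp (-c) * -Real.exp (-c)) c :=
    by have := (hasDerivAt_Li2 ht0 ht1).comp c hexpneg; exact this
  have h := (hA.sub hB).add (hC.const_mul 2)
  have hzeta : zeta = fun c : ℝ => c ^ 2 / (Real.exp c - 1)
      - 2 * c * Real.log (1 - Real.exp (-c)) + 2 * Li2 (Real.exp (-c)) := rfl
  rw [hzeta]
  refine h.congr_deriv ?_
  have hexp : Real.exp (-c) = (Real.exp c)⁻¹ := Real.exp_neg c
  have hepos : (0:ℝ) < Real.exp c := Real.exp_pos c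
  rw [hexp]
  field_simp
  ring

open Filter in
lemma tendsto_zeta_zero : Tendsto zeta (nhdsWithin 0 (Set.Ioi 0)) (nhds (π ^ 2 / 3)) := by
  have hmono : nhdsWithin (0:ℝ) (Set.Ioi 0) ≤ nhdsWithin 0 ({0}ᶜ) :=
    nhdsWithin_mono 0 (fun x hx => ne_of_gt hx)
  have hmem : ∀ᶠ c in nhdsWithin (0:ℝ) (Set.Ioi 0), 0 < c := self_mem_nhdsWithin
  -- slope of exp at 0
  have hslope : Tendsto (fun c : ℝ => (Real.exp c - 1) / c) (nhdsWithin 0 ({0}ᶜ)) (nhds 1) := by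
    have h := hasDerivAt_iff_tendsto_slope.mp (Real.hasDerivAt_exp 0)
    rw [Real.exp_zero] at h
    refine h.congr (fun c => ?_)
    simp [slope_fun_def, div_eq_inv_mul]
  have hinvslope : Tendsto (fun c : ℝ => c / (Real.exp c - 1)) (nhdsWithin 0 ({0}ᶜ)) (nhds 1) := by
    have h := (hslope.inv₀ one_ne_zero).congr (fun c => by rw [inv_div])
    simpa using h
  -- piece 1
  have T1 : Tendsto (fun c : ℝ => c ^ 2 / (Real.exp c - 1)) (nhdsWithin 0 (Set.Ioi 0)) (nhds 0) := by
    have hid : Tendsto (fun c : ℝ => c) (nhdsWithin 0 (Set.Ioi 0)) (nhds 0) :=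
      (continuous_id.tendsto 0).mono_left nhdsWithin_le_nhds
    have h := hid.mul (hinvslope.mono_left hmono)
    rw [zero_mul] at h
    refine h.congr (fun c => ?_)
    rw [pow_two, mul_div_assoc]
  -- slope for u = 1 - exp(-c)
  have hu' : HasDerivAt (fun c : ℝ => 1 - Real.exp (-c)) 1 (0 : ℝ) := by
    have hexpneg : HasDerivAt (fun c : ℝ => Real.exp (-c)) (-Real.exp (-(0:ℝ))) 0 := by
      exact ((Real.hasDerivAt_exp (-(0:ℝ))).comp 0 (hasDerivAt_neg (0:ℝ))).congr_deriv (by simp)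
    simpa using hexpneg.const_sub 1
  have huslope : Tendsto (fun c : ℝ => (1 - Real.exp (-c)) / c) (nhdsWithin 0 ({0}ᶜ)) (nhds 1) := by
    have h := hasDerivAt_iff_tendsto_slope.mp hu'
    refine h.congr (fun c => ?_)
    simp [slope_fun_def, div_eq_inv_mul]
  have huinv : Tendsto (fun c : ℝ => c / (1 - Real.exp (-c))) (nhdsWithin 0 ({0}ᶜ)) (nhds 1) := by
    have h := (huslope.inv₀ one_ne_zero).congr (fun c => by rw [inv_div])
    simpa using h
  -- piece 2
  have T2 : Tendsto (fun c : ℝ => 2 * c * Real.log (1 - Real.exp (-c)))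
      (nhdsWithin 0 (Set.Ioi 0)) (nhds 0) := by
    have hu0 : Tendsto (fun c : ℝ => 1 - Real.exp (-c)) (nhdsWithin 0 (Set.Ioi 0)) (nhds 0) := by
      have : Continuous (fun c : ℝ => 1 - Real.exp (-c)) :=
        continuous_const.sub (Real.continuous_exp.comp continuous_neg)
      have h := (this.tendsto 0).mono_left (nhdsWithin_le_nhds (a := (0:ℝ)) (s := Set.Ioi 0))
      simpa using h
    have hmullog : Tendsto (fun c : ℝ => (1 - Real.exp (-c)) * Real.log (1 - Real.exp (-c)))
        (nhdsWithin 0 (Set.Ioi 0)) (nhds 0) := by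
      have h := (Real.continuous_mul_log.tendsto 0).comp hu0
      simpa [Function.comp_def] using h
    have h := (huinv.mono_left hmono).mul hmullog
    rw [one_mul] at h
    have h2 := h.const_mul 2
    rw [mul_zero] at h2
    refine Tendsto.congr' ?_ h2
    filter_upwards [hmem] with c hc
    have hu : (0:ℝ) < 1 - Real.exp (-c) := by
      have : Real.exp (-c) < 1 := by
        rw [← Real.exp_zero]; exact Real.exp_lt_exp.mpr (by linarith)
      linarith
    field_simp
  -- piece 3
  have T3 : Tendsto (fun c : ℝ => 2 * Li2 (Real.exp (-c)))
      (nhdsWithin 0 (Set.Ioi 0)) (nhds (π ^ 2 / 3)) := by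
    have hexp : Tendsto (fun c : ℝ => Real.exp (-c)) (nhdsWithin 0 (Set.Ioi 0)) (nhds 1) := by
      have h := ((Real.continuous_exp.comp continuous_neg).tendsto 0).mono_left
        (nhdsWithin_le_nhds (a := (0:ℝ)) (s := Set.Ioi 0))
      simpa [Function.comp_def] using h
    have h := (continuous_Li2ext.tendsto 1).comp hexp
    rw [Li2ext_one] at h
    have h2 := h.const_mul 2
    have heq : Tendsto (fun c : ℝ => 2 * Li2 (Real.exp (-c)))
        (nhdsWithin 0 (Set.Ioi 0)) (nhds (2 * (π ^ 2 / 6))) := by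
      refine Tendsto.congr' ?_ h2
      filter_upwards [hmem] with c hc
      have ht1 : Real.exp (-c) ≤ 1 := by
        rw [← Real.exp_zero]; exact Real.exp_le_exp.mpr (by linarith)
      rw [Function.comp_apply, Li2ext_eq ⟨(Real.exp_pos _).le, ht1⟩]
    convert heq using 2
    ring
  have h := (T1.sub T2).add T3
  rw [zero_sub, neg_zero, zero_add] at h
  exact h

open Filter in
lemma tendsto_zeta_atTop : Tendsto zeta atTop (nhds 0) := by
  have hmem : ∀ᶠ c : ℝ in atTop, 1 ≤ c := eventually_ge_atTop 1
  -- piece 1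
  have A1 : Tendsto (fun c : ℝ => c ^ 2 / (Real.exp c - 1)) atTop (nhds 0) := by
    have hk : Tendsto (fun c : ℝ => c ^ 2 * Real.exp (-c)) atTop (nhds 0) :=
      Real.tendsto_pow_mul_exp_neg_atTop_nhds_zero 2
    have hm : Tendsto (fun c : ℝ => 1 - Real.exp (-c)) atTop (nhds 1) := by
      have h := Real.tendsto_exp_neg_atTop_nhds_zero.const_sub 1
      simpa using h
    have h := hk.div hm one_ne_zero
    rw [zero_div] at h
    refine Tendsto.congr' ?_ h
    filter_upwards [hmem] with c hc
    have he1 : 1 < Real.exp c := by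
      rw [← Real.exp_zero]; exact Real.exp_lt_exp.mpr (by linarith)
    have hne : Real.exp c - 1 ≠ 0 := by linarith
    simp only [Pi.div_apply]
    rw [Real.exp_neg]
    have hepos : (0:ℝ) < Real.exp c := Real.exp_pos c
    field_simp
  -- piece 2 : squeeze
  have A2 : Tendsto (fun c : ℝ => 2 * c * Real.log (1 - Real.exp (-c))) atTop (nhds 0) := by
    have hlow : Tendsto (fun c : ℝ => -4 * (c ^ 1 * Real.exp (-c))) atTop (nhds 0) := by
      have h := (Real.tendsto_pow_mul_exp_neg_atTop_nhds_zero 1).const_mul (-4)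
      simpa using h
    refine tendsto_of_tendsto_of_tendsto_of_le_of_le' hlow tendsto_const_nhds ?_ ?_
    · filter_upwards [hmem] with c hc
      have ht : Real.exp (-c) ≤ 1 / 2 := by
        calc Real.exp (-c) ≤ Real.exp (-1) := Real.exp_le_exp.mpr (by linarith)
          _ ≤ 1 / 2 := by
              rw [Real.exp_neg]
              rw [inv_le_comm₀ (Real.exp_pos 1) (by norm_num)]
              norm_num
              linarith [Real.add_one_le_exp 1]
      have ht0 : 0 < Real.exp (-c) := Real.exp_pos _
      have hu : (0:ℝ) < 1 - Real.exp (-c) := by linarith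
      have hlog : 1 - (1 - Real.exp (-c))⁻¹ ≤ Real.log (1 - Real.exp (-c)) :=
        Real.one_sub_inv_le_log_of_pos hu
      have hb : -(2 * Real.exp (-c)) ≤ 1 - (1 - Real.exp (-c))⁻¹ := by
        rw [← sub_nonneg]
        have h2 : (1:ℝ)/2 ≤ 1 - Real.exp (-c) := by linarith
        have h3 : (1 - Real.exp (-c))⁻¹ ≤ 2 := by
          rw [inv_le_comm₀ hu (by norm_num)]
          linarith
        have h4 : (1 - Real.exp (-c))⁻¹ - 1 = Real.exp (-c) * (1 - Real.exp (-c))⁻¹ := by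
          field_simp
          ring
        have h5 : Real.exp (-c) * (1 - Real.exp (-c))⁻¹ ≤ Real.exp (-c) * 2 :=
          mul_le_mul_of_nonneg_left h3 ht0.le
        linarith
      have hc0 : (0:ℝ) < c := by linarith
      calc -4 * (c ^ 1 * Real.exp (-c)) = 2 * c * (-(2 * Real.exp (-c))) := by ring
        _ ≤ 2 * c * Real.log (1 - Real.exp (-c)) := by
            apply mul_le_mul_of_nonneg_left (hb.trans hlog) (by linarith)
    · filter_upwards [hmem] with c hc
      have ht0 : 0 < Real.exp (-c) := Real.exp_pos _
      have hu1 : 1 - Real.exp (-c) ≤ 1 := by linarith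
      have ht1 : Real.exp (-c) < 1 := by
        rw [← Real.exp_zero]; exact Real.exp_lt_exp.mpr (by linarith)
      have hlog : Real.log (1 - Real.exp (-c)) ≤ 0 :=
        Real.log_nonpos (by linarith) hu1
      have : 2 * c * Real.log (1 - Real.exp (-c)) ≤ 2 * c * 0 :=
        mul_le_mul_of_nonneg_left hlog (by linarith)
      simpa using this
  -- piece 3
  have A3 : Tendsto (fun c : ℝ => 2 * Li2 (Real.exp (-c))) atTop (nhds 0) := by
    have h := (continuous_Li2ext.tendsto 0).comp Real.tendsto_exp_neg_atTop_nhds_zero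
    rw [Li2ext_zero] at h
    have h2 := h.const_mul 2
    rw [mul_zero] at h2
    refine Tendsto.congr' ?_ h2
    filter_upwards [hmem] with c hc
    have ht1 : Real.exp (-c) ≤ 1 := by
      rw [← Real.exp_zero]; exact Real.exp_le_exp.mpr (by linarith)
    rw [Function.comp_apply, Li2ext_eq ⟨(Real.exp_pos _).le, ht1⟩]
  have h := (A1.sub A2).add A3
  rw [sub_zero, add_zero] at h
  exact h

theorem zeta_properties :
    (∀ c : ℝ, 0 < c →
      HasDerivAt zeta (-(c ^ 2 * Real.exp c / (Real.exp c - 1) ^ 2)) c) ∧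
    (∀ c : ℝ, 0 < c → -(c ^ 2 * Real.exp c / (Real.exp c - 1) ^ 2) < 0) ∧
    StrictAntiOn zeta (Set.Ioi 0) ∧
    Filter.Tendsto zeta (nhdsWithin 0 (Set.Ioi 0)) (nhds (π ^ 2 / 3)) ∧
    Filter.Tendsto zeta Filter.atTop (nhds 0) := by
  have hderiv : ∀ c : ℝ, 0 < c →
      HasDerivAt zeta (-(c ^ 2 * Real.exp c / (Real.exp c - 1) ^ 2)) c :=
    fun c hc => zeta_hasDerivAt hc
  have hneg : ∀ c : ℝ, 0 < c → -(c ^ 2 * Real.exp c / (Real.exp c - 1) ^ 2) < 0 := by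
    intro c hc
    have he1 : 1 < Real.exp c := by
      rw [← Real.exp_zero]; exact Real.exp_lt_exp.mpr hc
    have h1 : (0:ℝ) < Real.exp c - 1 := by linarith
    have : 0 < c ^ 2 * Real.exp c / (Real.exp c - 1) ^ 2 := by positivity
    linarith
  refine ⟨hderiv, hneg, ?_, tendsto_zeta_zero, tendsto_zeta_atTop⟩
  apply strictAntiOn_of_deriv_neg (convex_Ioi 0)
  · intro x hx
    exact ((hderiv x hx).differentiableAt).continuousAt.continuousWithinAt
  · intro x hx
    rw [interior_Ioi] at hx
    rw [(hderiv x hx).deriv]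
    exact hneg x hx
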